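/- Let I : ℝ^K → ℝ^K be a contractive interference function with modulus c ∈ [0,1) and weight vector v > 0. Then I has a unique fixed point p* in the nonnegative orthant {p ∈ ℝ^K : p ≥ 0}, and for every starting point p(0) ≥ 0 the iterates p(k+1) = I(p(k)) converge to p* as k → ∞. -/

import Mathlib

open scoped BigOperators

/-- A contractive interference function has a unique fixed point in the nonnegative
orthant, and the fixed-point iteration converges to it from any nonnegative start. -/
theorem stmt1 (K : ℕ) (I : (Fin K → ℝ) → (Fin K → ℝ)) (c : ℝ) (v : Fin K → ℝ)
    (hc0 : 0 ≤ c) (hc1 : c < 1) (hv : ∀ i, 0 < v i)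
    (hpos : ∀ p : Fin K → ℝ, 0 ≤ p → 0 ≤ I p)
    (hmono : ∀ p p' : Fin K → ℝ, 0 ≤ p → p ≤ p' → I p ≤ I p')
    (hcontr : ∀ p : Fin K → ℝ, 0 ≤ p → ∀ α : ℝ, 0 < α → I (p + α • v) ≤ I p + (c * α) • v) :
    ∃ pstar : Fin K → ℝ, 0 ≤ pstar ∧ I pstar = pstar ∧
      (∀ q : Fin K → ℝ, 0 ≤ q → I q = q → q = pstar) ∧
      ∀ p0 : Fin K → ℝ, 0 ≤ p0 →
        Filter.Tendsto (fun k => I^[k] p0) Filter.atTop (nhds pstar) := by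
  -- existence of a weighted bound
  have hbound : ∀ p q : Fin K → ℝ, ∀ i, |p i - q i| ≤ (∑ j, |p j - q j| / v j) * v i := by
    intro p q i
    have h1 : |p i - q i| / v i ≤ ∑ j, |p j - q j| / v j :=
      Finset.single_le_sum (f := fun j => |p j - q j| / v j)
        (fun j _ => div_nonneg (abs_nonneg _) (hv j).le) (Finset.mem_univ i)
    have h2 : (|p i - q i| / v i) * v i = |p i - q i| := div_mul_cancel₀ _ (hv i).ne'
    rw [← h2]
    exact mul_le_mul_of_nonneg_right h1 (hv i).le
  have hbnonneg : ∀ p q : Fin K → ℝ, 0 ≤ ∑ j, |p j - q j| / v j :=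
    fun p q => Finset.sum_nonneg fun j _ => div_nonneg (abs_nonneg _) (hv j).le
  -- one-sided Lipschitz estimate
  have hside : ∀ p q : Fin K → ℝ, 0 ≤ p → 0 ≤ q → ∀ α : ℝ, 0 < α →
      (∀ i, q i ≤ p i + α * v i) → ∀ i, I q i ≤ I p i + c * α * v i := by
    intro p q hp hq α hα hpq i
    have h1 : q ≤ p + α • v := by
      intro j
      simpa [smul_eq_mul] using hpq j
    have h2 : I q ≤ I (p + α • v) := hmono _ _ hq h1
    have h3 : I (p + α • v) ≤ I p + (c * α) • v := hcontr p hp α hα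
    have := le_trans (h2 i) (h3 i)
    simpa [smul_eq_mul, mul_assoc] using this
  -- key weighted contraction estimate
  have key : ∀ p q : Fin K → ℝ, 0 ≤ p → 0 ≤ q → ∀ α : ℝ, 0 ≤ α →
      (∀ i, |p i - q i| ≤ α * v i) → ∀ i, |I p i - I q i| ≤ c * α * v i := by
    intro p q hp hq α hα hpq
    rcases hα.eq_or_lt with h0 | h0
    · have hpq' : p = q := by
        funext i
        have h := hpq i
        rw [← h0, zero_mul] at h
        have h2 : |p i - q i| = 0 := le_antisymm h (abs_nonneg _)
        have := abs_eq_zero.mp h2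
        linarith
      intro i
      rw [hpq']
      simp [← h0]
    · intro i
      rw [abs_le]
      constructor
      · have hb : ∀ j, q j ≤ p j + α * v j := by
          intro j
          have := (abs_le.mp (hpq j)).1
          linarith
        have := hside p q hp hq α h0 hb i
        linarith
      · have hb : ∀ j, p j ≤ q j + α * v j := by
          intro j
          have := (abs_le.mp (hpq j)).2
          linarith
        have := hside q p hq hp α h0 hb i
        linarith
  -- main convergence construction
  have main : ∀ p0 : Fin K → ℝ, 0 ≤ p0 → ∃ L : Fin K → ℝ, 0 ≤ L ∧ I L = L ∧
      Filter.Tendsto (fun k => I^[k] p0) Filter.atTop (nhds L) := by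
    intro p0 hp0
    have hnn : ∀ k, (0 : Fin K → ℝ) ≤ I^[k] p0 := by
      intro k
      induction k with
      | zero => simpa using hp0
      | succ k ih => rw [Function.iterate_succ_apply']; exact hpos _ ih
    set β : ℝ := ∑ j, |I^[1] p0 j - I^[0] p0 j| / v j with hβ
    have hβ0 : 0 ≤ β := hbnonneg _ _
    have step : ∀ k, ∀ i, |I^[k+1] p0 i - I^[k] p0 i| ≤ c ^ k * β * v i := by
      intro k
      induction k with
      | zero => intro i; rw [pow_zero, one_mul]; exact hbound (I^[1] p0) (I^[0] p0) i
      | succ k ih =>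
        intro i
        have ih' : ∀ j, |I (I^[k] p0) j - I^[k] p0 j| ≤ c ^ k * β * v j := by
          intro j
          have := ih j
          rwa [Function.iterate_succ_apply'] at this
        have h1 : |I (I (I^[k] p0)) i - I (I^[k] p0) i| ≤ c * (c ^ k * β) * v i :=
          key _ _ (hpos _ (hnn k)) (hnn k) (c ^ k * β) (by positivity) ih' i
        rw [Function.iterate_succ_apply' I (k+1), Function.iterate_succ_apply' I k]
        calc |I (I (I^[k] p0)) i - I (I^[k] p0) i| ≤ c * (c ^ k * β) * v i := h1
          _ = c ^ (k+1) * β * v i := by ring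
    set V : ℝ := ∑ j, v j with hV
    have hV0 : 0 ≤ V := Finset.sum_nonneg fun j _ => (hv j).le
    have hVi : ∀ i, v i ≤ V := fun i =>
      Finset.single_le_sum (fun j _ => (hv j).le) (Finset.mem_univ i)
    have hcauchy : CauchySeq (fun k => I^[k] p0) := by
      apply cauchySeq_of_le_geometric c (β * V) hc1
      intro n
      rw [dist_pi_le_iff (by positivity)]
      intro i
      rw [Real.dist_eq, abs_sub_comm]
      calc |I^[n+1] p0 i - I^[n] p0 i| ≤ c ^ n * β * v i := step n i
        _ ≤ β * V * c ^ n := by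
            have h1 : c ^ n * β * v i ≤ c ^ n * β * V :=
              mul_le_mul_of_nonneg_left (hVi i) (by positivity)
            linarith [h1]
    obtain ⟨L, hL⟩ := cauchySeq_tendsto_of_complete hcauchy
    have hLi : ∀ i, Filter.Tendsto (fun k => I^[k] p0 i) Filter.atTop (nhds (L i)) :=
      fun i => tendsto_pi_nhds.mp hL i
    have hL0 : 0 ≤ L := by
      intro i
      exact le_of_tendsto_of_tendsto' tendsto_const_nhds (hLi i) (fun k => hnn k i)
    -- fixed point
    set α : ℕ → ℝ := fun k => ∑ j, |L j - I^[k] p0 j| / v j with hα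
    have hα0 : ∀ k, 0 ≤ α k := fun k => hbnonneg _ _
    have hαtend : Filter.Tendsto α Filter.atTop (nhds 0) := by
      have : Filter.Tendsto α Filter.atTop (nhds (∑ j : Fin K, (0:ℝ))) := by
        apply tendsto_finset_sum
        intro j _
        have h1 : Filter.Tendsto (fun k => L j - I^[k] p0 j) Filter.atTop (nhds 0) := by
          have := (tendsto_const_nhds (x := L j) (f := Filter.atTop (α := ℕ))).sub (hLi j)
          simpa using this
        have h2 := h1.abs
        simp only [abs_zero] at h2
        simpa using h2.div_const (v j)
      simpa using this
    have hfix : I L = L := by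
      funext i
      have htend1 : Filter.Tendsto (fun k => I^[k+1] p0 i) Filter.atTop (nhds (L i)) :=
        (hLi i).comp (Filter.tendsto_add_atTop_nat 1)
      have htend2 : Filter.Tendsto (fun k => I^[k+1] p0 i) Filter.atTop (nhds (I L i)) := by
        rw [tendsto_iff_dist_tendsto_zero]
        apply squeeze_zero (fun k => dist_nonneg) (g := fun k => c * α k * v i)
        · intro k
          rw [Real.dist_eq, Function.iterate_succ_apply', abs_sub_comm]
          exact key L (I^[k] p0) hL0 (hnn k) (α k) (hα0 k) (fun j => hbound L (I^[k] p0) j) i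
        · have := (hαtend.const_mul c).mul_const (v i)
          simpa [mul_assoc] using this
      exact tendsto_nhds_unique htend2 htend1
    exact ⟨L, hL0, hfix, hL⟩
  -- uniqueness of fixed point
  have uniq : ∀ q r : Fin K → ℝ, 0 ≤ q → 0 ≤ r → I q = q → I r = r → q = r := by
    intro q r hq hr hfq hfr
    set β : ℝ := ∑ j, |q j - r j| / v j with hβ
    have hβ0 : 0 ≤ β := hbnonneg _ _
    have hrec : ∀ n, ∀ i, |q i - r i| ≤ c ^ n * β * v i := by
      intro n
      induction n with
      | zero => intro i; simpa using hbound q r i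
      | succ n ih =>
        intro i
        have h1 : |I q i - I r i| ≤ c * (c ^ n * β) * v i :=
          key q r hq hr (c ^ n * β) (by positivity) ih i
        rw [hfq, hfr] at h1
        calc |q i - r i| ≤ c * (c ^ n * β) * v i := h1
          _ = c ^ (n+1) * β * v i := by ring
    funext i
    have htend : Filter.Tendsto (fun n => c ^ n * β * v i) Filter.atTop (nhds 0) := by
      have h1 := tendsto_pow_atTop_nhds_zero_of_lt_one hc0 hc1
      have := (h1.mul_const β).mul_const (v i)
      simpa using this
    have h2 : |q i - r i| ≤ 0 := ge_of_tendsto' htend (fun n => hrec n i)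
    have := abs_eq_zero.mp (le_antisymm h2 (abs_nonneg _))
    linarith
  obtain ⟨pstar, hp1, hp2, hp3⟩ := main 0 le_rfl
  refine ⟨pstar, hp1, hp2, fun q hq hfq => uniq q pstar hq hp1 hfq hp2, ?_⟩
  intro p0 hp0
  obtain ⟨L, hL1, hL2, hL3⟩ := main p0 hp0
  rwa [uniq L pstar hL1 hp1 hL2 hp2] at hL3
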